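/- For p ∈ B_n, the three elements c₁ = Δ_{n+1}², c₂ = d(p) σ₂⁻¹ ⋯ σ_n⁻¹, and c₃ = σ₁ ⋯ σ_{n−1} σ_n² σ_{n−1} ⋯ σ₁ of B_{n+1} pairwise commute, so the subgroup C' = ⟨c₁, c₂, c₃⟩ is abelian. -/

import Mathlib

/-- Braid relations for the infinite braid group: generator `i : ℕ` represents σ_{i+1}. -/
def braidRelsInf : Set (FreeGroup ℕ) :=
  {r | ∃ i j : ℕ,
    (j = i + 1 ∧ r = FreeGroup.of i * FreeGroup.of j * FreeGroup.of i *
        (FreeGroup.of j * FreeGroup.of i * FreeGroup.of j)⁻¹) ∨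
    (i + 2 ≤ j ∧ r = FreeGroup.of i * FreeGroup.of j * (FreeGroup.of j * FreeGroup.of i)⁻¹)}

/-- The braid group B_∞ on infinitely many strands. -/
abbrev BInf : Type := PresentedGroup braidRelsInf

/-- `sigmaInf i` is the Artin generator σ_{i+1} of `BInf` (0-indexed). -/
def sigmaInf (i : ℕ) : BInf := PresentedGroup.of i

/-- Braid relations on `n` generators: `B n` below is the braid group B_{n+1} on
n+1 strands; the generator `i : Fin n` represents σ_{i+1}. -/
def braidRels (n : ℕ) : Set (FreeGroup (Fin n)) :=
  {r | ∃ i j : Fin n,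
    ((j : ℕ) = (i : ℕ) + 1 ∧ r = FreeGroup.of i * FreeGroup.of j * FreeGroup.of i *
        (FreeGroup.of j * FreeGroup.of i * FreeGroup.of j)⁻¹) ∨
    ((i : ℕ) + 2 ≤ (j : ℕ) ∧ r = FreeGroup.of i * FreeGroup.of j *
        (FreeGroup.of j * FreeGroup.of i)⁻¹)}

/-- `B n` is the braid group on n+1 strands (the paper's B_{n+1}), with n generators. -/
abbrev B (n : ℕ) : Type := PresentedGroup (braidRels n)

/-- `σ i` for `i : Fin n` is the Artin generator σ_{i+1} of `B n` (0-indexed). -/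
def σ {n : ℕ} (i : Fin n) : B n := PresentedGroup.of i

/-- `delta n = σ_n ⋯ σ_1` (the paper's δ_{n+1} when `B n` is the paper's B_{n+1}). -/
def delta (n : ℕ) : B n := ((List.ofFn (fun i : Fin n => σ i)).reverse).prod

/-- `Delta n = (σ_n ⋯ σ_1)(σ_n ⋯ σ_2) ⋯ (σ_n)`, the paper's Δ_{n+1}. -/
def Delta (n : ℕ) : B n :=
  (List.ofFn (fun k : Fin n =>
    (((List.ofFn (fun i : Fin n => σ i)).reverse).take (n - (k : ℕ))).prod)).prod

namespace BraidProofAux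

variable {G : Type*} [Group G]

/-- descending word `f (b+l-1) * ⋯ * f b`. -/
def dsc (f : ℕ → G) (b : ℕ) : ℕ → G
  | 0 => 1
  | l + 1 => f (b + l) * dsc f b l

/-- ascending word `f b * ⋯ * f (b+l-1)`. -/
def asc (f : ℕ → G) (b : ℕ) : ℕ → G
  | 0 => 1
  | l + 1 => asc f b l * f (b + l)

/-- The Garside element word. -/
def DelW : ℕ → (ℕ → G) → G
  | 0, _ => 1
  | n + 1, f => dsc f 0 (n + 1) * DelW n (fun i => f (i + 1))

@[simp] lemma dsc_zero (f : ℕ → G) (b : ℕ) : dsc f b 0 = 1 := rfl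
@[simp] lemma dsc_succ (f : ℕ → G) (b l : ℕ) : dsc f b (l + 1) = f (b + l) * dsc f b l := rfl
@[simp] lemma asc_zero (f : ℕ → G) (b : ℕ) : asc f b 0 = 1 := rfl
@[simp] lemma asc_succ (f : ℕ → G) (b l : ℕ) : asc f b (l + 1) = asc f b l * f (b + l) := rfl
@[simp] lemma DelW_zero (f : ℕ → G) : DelW 0 f = 1 := rfl
@[simp] lemma DelW_succ (n : ℕ) (f : ℕ → G) :
    DelW (n + 1) f = dsc f 0 (n + 1) * DelW n (fun i => f (i + 1)) := rfl

lemma dsc_shift_fun (f : ℕ → G) (b l : ℕ) : dsc (fun i => f (i + 1)) b l = dsc f (b + 1) l := by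
  induction l with
  | zero => rfl
  | succ l ih => simp [ih, Nat.add_right_comm]

lemma asc_shift_fun (f : ℕ → G) (b l : ℕ) : asc (fun i => f (i + 1)) b l = asc f (b + 1) l := by
  induction l with
  | zero => rfl
  | succ l ih => simp [ih, Nat.add_right_comm]

section Rels

variable (f : ℕ → G) (N : ℕ)
variable (hc : ∀ i j, i + 2 ≤ j → f i * f j = f j * f i)
variable (hb : ∀ i, i + 2 ≤ N → f i * f (i + 1) * f i = f (i + 1) * f i * f (i + 1))

include hc in
lemma dsc_comm : ∀ l b j, b + l + 1 ≤ j → f j * dsc f b l = dsc f b l * f j := by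
  intro l
  induction l with
  | zero => intro b j _; simp
  | succ l ih =>
    intro b j h
    rw [dsc_succ, ← mul_assoc, ← hc (b + l) j (by omega), mul_assoc, ih b j (by omega),
      ← mul_assoc]

include hc in
lemma asc_comm : ∀ l b j, b + l + 1 ≤ j → f j * asc f b l = asc f b l * f j := by
  intro l
  induction l with
  | zero => intro b j _; simp
  | succ l ih =>
    intro b j h
    rw [asc_succ, ← mul_assoc, ih b j (by omega), mul_assoc, ← hc (b + l) j (by omega),
      ← mul_assoc]

include hc hb in
lemma dsc_shift : ∀ l b i, b ≤ i → i + 2 ≤ b + l → b + l ≤ N →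
    dsc f b l * f (i + 1) = f i * dsc f b l := by
  intro l
  induction l with
  | zero => intro b i h1 h2 _; omega
  | succ l ih =>
    intro b i h1 h2 h3
    by_cases hcase : i + 2 ≤ b + l
    · rw [dsc_succ, mul_assoc, ih b i h1 hcase (by omega), ← mul_assoc,
        ← hc i (b + l) hcase, mul_assoc]
    · obtain ⟨l', rfl⟩ : ∃ l', l = l' + 1 := ⟨l - 1, by omega⟩
      have e1 : b + l' = i := by omega
      have e2 : b + (l' + 1) = i + 1 := by omega
      have hcm : f (i + 1) * dsc f b l' = dsc f b l' * f (i + 1) :=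
        dsc_comm f hc l' b (i + 1) (by omega)
      have hbr := hb i (by omega)
      simp only [dsc_succ, e1, e2, mul_assoc]
      rw [← hcm, ← mul_assoc, ← mul_assoc, ← hbr]
      simp only [mul_assoc]

include hc hb in
lemma asc_shift : ∀ l b i, b ≤ i → i + 2 ≤ b + l → b + l ≤ N →
    asc f b l * f i = f (i + 1) * asc f b l := by
  intro l
  induction l with
  | zero => intro b i h1 h2 _; omega
  | succ l ih =>
    intro b i h1 h2 h3
    by_cases hcase : i + 2 ≤ b + l
    · rw [asc_succ, mul_assoc, ← hc i (b + l) hcase, ← mul_assoc,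
        ih b i h1 hcase (by omega), mul_assoc]
    · obtain ⟨l', rfl⟩ : ∃ l', l = l' + 1 := ⟨l - 1, by omega⟩
      have e1 : b + l' = i := by omega
      have e2 : b + (l' + 1) = i + 1 := by omega
      have hcm : f (i + 1) * asc f b l' = asc f b l' * f (i + 1) :=
        asc_comm f hc l' b (i + 1) (by omega)
      have hbr := hb i (by omega)
      have hbr' : f i * (f (i + 1) * f i) = f (i + 1) * (f i * f (i + 1)) := by
        rw [← mul_assoc, hbr, mul_assoc]
      simp only [asc_succ, e1, e2, mul_assoc]
      rw [hbr', ← mul_assoc, ← hcm, mul_assoc]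

include hc hb in
lemma dsc_asc_swap : ∀ l n, l ≤ n → n + 1 ≤ N →
    dsc f 0 (n + 1) * asc f 1 l = asc f 0 l * dsc f 0 (n + 1) := by
  intro l
  induction l with
  | zero => intro n _ _; simp
  | succ l ih =>
    intro n hl hn
    have h1 : dsc f 0 (n + 1) * f (l + 1) = f l * dsc f 0 (n + 1) :=
      dsc_shift f N hc hb (n + 1) 0 l (by omega) (by omega) (by omega)
    rw [asc_succ, ← mul_assoc, ih n (by omega) hn, show (1 : ℕ) + l = l + 1 from by omega,
      mul_assoc, h1, ← mul_assoc]
    simp [Nat.zero_add]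

end Rels

lemma DelW_asc : ∀ (n : ℕ) (f : ℕ → G),
    (∀ i j, i + 2 ≤ j → f i * f j = f j * f i) →
    (∀ i, i + 2 ≤ n + 1 → f i * f (i + 1) * f i = f (i + 1) * f i * f (i + 1)) →
    DelW (n + 1) f = asc f 0 (n + 1) * DelW n f := by
  intro n
  induction n with
  | zero => intro f _ _; simp
  | succ n ih =>
    intro f hc hb
    have hc' : ∀ i j, i + 2 ≤ j → (fun i => f (i + 1)) i * (fun i => f (i + 1)) j
        = (fun i => f (i + 1)) j * (fun i => f (i + 1)) i := fun i j h => hc _ _ (by omega)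
    have hb' : ∀ i, i + 2 ≤ n + 1 → (fun i => f (i + 1)) i * (fun i => f (i + 1)) (i + 1) *
        (fun i => f (i + 1)) i = (fun i => f (i + 1)) (i + 1) * (fun i => f (i + 1)) i *
        (fun i => f (i + 1)) (i + 1) := fun i h => hb (i + 1) (by omega)
    have key : dsc f 0 (n + 2) * asc f 1 (n + 1) = asc f 0 (n + 1) * dsc f 0 (n + 2) :=
      dsc_asc_swap f (n + 2) hc (fun i h => hb i (by omega)) (n + 1) (n + 1) le_rfl le_rfl
    calc DelW (n + 2) f = dsc f 0 (n + 2) * DelW (n + 1) (fun i => f (i + 1)) := rfl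
      _ = dsc f 0 (n + 2) * (asc (fun i => f (i + 1)) 0 (n + 1) *
          DelW n (fun i => f (i + 1))) := by rw [ih _ hc' hb']
      _ = dsc f 0 (n + 2) * asc f 1 (n + 1) * DelW n (fun i => f (i + 1)) := by
          rw [asc_shift_fun, ← mul_assoc]
      _ = asc f 0 (n + 1) * dsc f 0 (n + 2) * DelW n (fun i => f (i + 1)) := by rw [key]
      _ = asc f 0 (n + 1) * (f (n + 1) * (dsc f 0 (n + 1) * DelW n (fun i => f (i + 1)))) := by
          rw [dsc_succ]; simp [mul_assoc]
      _ = asc f 0 (n + 2) * DelW (n + 1) f := by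
          rw [DelW_succ, asc_succ]
          simp [mul_assoc]

lemma DelW_flip : ∀ (n : ℕ) (f : ℕ → G),
    (∀ i j, i + 2 ≤ j → f i * f j = f j * f i) →
    (∀ i, i + 2 ≤ n → f i * f (i + 1) * f i = f (i + 1) * f i * f (i + 1)) →
    ∀ i, i < n → DelW n f * f i = f (n - 1 - i) * DelW n f := by
  intro n
  induction n with
  | zero => intro f _ _ i hi; omega
  | succ n ih =>
    intro f hc hb i hi
    rcases Nat.eq_zero_or_pos n with rfl | hn
    · obtain rfl : i = 0 := by omega
      simp [dsc]
    rcases i with _ | j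
    · -- i = 0
      have hD2 : DelW (n + 1) f = asc f 0 (n + 1) * DelW n f :=
        DelW_asc n f hc (fun i h => hb i (by omega))
      have hIH : DelW n f * f 0 = f (n - 1) * DelW n f :=
        ih f hc (fun i h => hb i (by omega)) 0 hn
      have hAS : asc f 0 (n + 1) * f (n - 1) = f n * asc f 0 (n + 1) := by
        have := asc_shift f (n + 1) hc hb (n + 1) 0 (n - 1) (by omega) (by omega) (by omega)
        rwa [show n - 1 + 1 = n from by omega] at this
      rw [show n + 1 - 1 - 0 = n from by omega, hD2, mul_assoc, hIH, ← mul_assoc, hAS,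
        mul_assoc, ← hD2]
    · -- i = j + 1
      have hc' : ∀ a b, a + 2 ≤ b → (fun i => f (i + 1)) a * (fun i => f (i + 1)) b
          = (fun i => f (i + 1)) b * (fun i => f (i + 1)) a := fun a b h => hc _ _ (by omega)
      have hb' : ∀ a, a + 2 ≤ n → (fun i => f (i + 1)) a * (fun i => f (i + 1)) (a + 1) *
          (fun i => f (i + 1)) a = (fun i => f (i + 1)) (a + 1) * (fun i => f (i + 1)) a *
          (fun i => f (i + 1)) (a + 1) := fun a h => hb (a + 1) (by omega)
      have hIH := ih (fun i => f (i + 1)) hc' hb' j (by omega)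
      have e3 : n - 1 - j + 1 = n - j := by omega
      rw [e3] at hIH
      have hDS : dsc f 0 (n + 1) * f (n - j) = f (n - j - 1) * dsc f 0 (n + 1) := by
        have := dsc_shift f (n + 1) hc hb (n + 1) 0 (n - j - 1) (by omega) (by omega) (by omega)
        rwa [show n - j - 1 + 1 = n - j from by omega] at this
      rw [show n + 1 - 1 - (j + 1) = n - j - 1 from by omega, DelW_succ, mul_assoc, hIH,
        ← mul_assoc, hDS, mul_assoc, ← DelW_succ]

lemma DelW_sq_comm (n : ℕ) (f : ℕ → G)
    (hc : ∀ i j, i + 2 ≤ j → f i * f j = f j * f i)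
    (hb : ∀ i, i + 2 ≤ n → f i * f (i + 1) * f i = f (i + 1) * f i * f (i + 1))
    (i : ℕ) (hi : i < n) : DelW n f ^ 2 * f i = f i * DelW n f ^ 2 := by
  have h1 := DelW_flip n f hc hb i hi
  have h2 := DelW_flip n f hc hb (n - 1 - i) (by omega)
  rw [show n - 1 - (n - 1 - i) = i from by omega] at h2
  rw [pow_two, mul_assoc, h1, ← mul_assoc, h2, mul_assoc]


/-- ℕ-indexed generators of `B n`, with junk value 1 out of range. -/
def sg (n : ℕ) (j : ℕ) : B n := if h : j < n then σ ⟨j, h⟩ else 1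

lemma mk_rel {n : ℕ} {r : FreeGroup (Fin n)} (hr : r ∈ braidRels n) :
    PresentedGroup.mk (braidRels n) r = 1 := by
  change (QuotientGroup.mk r : FreeGroup (Fin n) ⧸ Subgroup.normalClosure (braidRels n)) = 1
  rw [QuotientGroup.eq_one_iff]
  exact Subgroup.subset_normalClosure hr

lemma sigma_braid {n : ℕ} (i j : Fin n) (h : (j : ℕ) = (i : ℕ) + 1) :
    σ i * σ j * σ i = σ j * σ i * σ j := by
  have h2 := mk_rel (n := n) ⟨i, j, Or.inl ⟨h, rfl⟩⟩
  rw [map_mul, map_inv, mul_inv_eq_one] at h2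
  simpa [σ, PresentedGroup.of, map_mul] using h2

lemma sigma_comm {n : ℕ} (i j : Fin n) (h : (i : ℕ) + 2 ≤ (j : ℕ)) :
    σ i * σ j = σ j * σ i := by
  have h2 := mk_rel (n := n) ⟨i, j, Or.inr ⟨h, rfl⟩⟩
  rw [map_mul, map_inv, mul_inv_eq_one] at h2
  simpa [σ, PresentedGroup.of, map_mul] using h2

lemma sg_braid {n : ℕ} (i : ℕ) (h : i + 2 ≤ n) :
    sg n i * sg n (i + 1) * sg n i = sg n (i + 1) * sg n i * sg n (i + 1) := by
  have h1 : i < n := by omega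
  have h2 : i + 1 < n := by omega
  simp only [sg, dif_pos h1, dif_pos h2]
  exact sigma_braid ⟨i, h1⟩ ⟨i + 1, h2⟩ rfl

lemma sg_comm {n : ℕ} (i j : ℕ) (h : i + 2 ≤ j) : sg n i * sg n j = sg n j * sg n i := by
  by_cases hj : j < n
  · have hi : i < n := by omega
    simp only [sg, dif_pos hj, dif_pos hi]
    exact sigma_comm ⟨i, hi⟩ ⟨j, hj⟩ h
  · simp [sg, dif_neg hj]

lemma sg_eq {n : ℕ} (i : Fin n) : σ i = sg n (i : ℕ) := by
  simp [sg, dif_pos i.isLt]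

lemma ofFn_sg (n : ℕ) : List.ofFn (fun i : Fin n => σ i) = (List.range n).map (sg n) := by
  apply List.ext_getElem
  · simp
  · intro i h1 h2
    have hi : i < n := by simpa using h2
    simp [sg, List.getElem_ofFn, dif_pos hi]

section ListLemmas

variable {G : Type*} [Group G]

lemma asc_eq_prod (f : ℕ → G) : ∀ l b, ((List.range' b l).map f).prod = asc f b l := by
  intro l
  induction l with
  | zero => intro b; simp
  | succ l ih =>
    intro b
    rw [List.range'_1_concat, List.map_append, List.prod_append]
    simp [ih b]

lemma dsc_eq_prod (f : ℕ → G) : ∀ l b, (((List.range' b l).reverse).map f).prod = dsc f b l := by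
  intro l
  induction l with
  | zero => intro b; simp
  | succ l ih =>
    intro b
    rw [List.range'_1_concat, List.reverse_append]
    simp only [List.reverse_singleton, List.map_append, List.prod_append, List.map_cons,
      List.map_nil, List.prod_cons, List.prod_nil, mul_one, dsc_succ, ih b]

lemma prod_map_inv (l : List G) : (l.map fun x => x⁻¹).prod = l.reverse.prod⁻¹ := by
  induction l with
  | nil => simp
  | cons a t ih => simp [ih, List.prod_append, mul_inv_rev]

lemma DelW_eq_list : ∀ (n : ℕ) (f : ℕ → G),
    DelW n f = ((List.range n).map (fun k => dsc f k (n - k))).prod := by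
  intro n
  induction n with
  | zero => intro f; simp
  | succ n ih =>
    intro f
    rw [DelW_succ, ih (fun i => f (i + 1)), List.range_succ_eq_map, List.map_cons,
      List.prod_cons, List.map_map]
    simp only [Nat.sub_zero, Function.comp_def, Nat.succ_sub_succ, Nat.succ_eq_add_one,
      dsc_shift_fun]

end ListLemmas

lemma take_rev_range {n k : ℕ} (hk : k ≤ n) :
    (List.range n).reverse.take (n - k) = (List.range' k (n - k)).reverse := by
  have hsplit : List.range' 0 k ++ List.range' k (n - k) = List.range n := by
    have h := @List.range'_append_1 0 k (n - k)
    rw [List.range_eq_range']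
    simpa [Nat.sub_add_cancel hk, Nat.add_sub_of_le hk, Nat.add_comm] using h
  rw [← hsplit, List.reverse_append, List.take_left']
  simp

lemma Delta_eq (n : ℕ) : Delta n = DelW n (sg n) := by
  rw [DelW_eq_list]
  unfold Delta
  congr 1
  apply List.ext_getElem
  · simp
  · intro i h1 h2
    have hi : i < n := by simpa using h2
    simp only [List.getElem_ofFn, List.getElem_map, List.getElem_range]
    rw [ofFn_sg, ← List.map_reverse, ← List.map_take, take_rev_range (le_of_lt hi),
      dsc_eq_prod]

end BraidProofAux

open BraidProofAux

/-- Proposition 3, second part. With `B (m+1)` the paper's B_{n+1}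
(n = m+1), `B m` the paper's B_n and `d` the shift homomorphism: for p ∈ B_n, the
elements c₁ = Δ_{n+1}², c₂ = d(p)σ₂⁻¹⋯σ_n⁻¹, c₃ = σ₁⋯σ_{n−1}σ_n²σ_{n−1}⋯σ₁
pairwise commute, hence the subgroup C' = ⟨c₁,c₂,c₃⟩ is abelian. -/
theorem c1_c2_c3_generate_abelian (m : ℕ) (d : B m →* B (m + 1))
    (hd : ∀ i : Fin m, d (σ i) = σ i.succ) (p : B m)
    (c₁ c₂ c₃ : B (m + 1))
    (hc₁ : c₁ = (Delta (m + 1)) ^ 2)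
    (hc₂ : c₂ = d p *
        (((List.ofFn (fun i : Fin (m + 1) => σ i)).drop 1).map (fun x => x⁻¹)).prod)
    (hc₃ : c₃ = (List.ofFn (fun i : Fin (m + 1) => σ i)).prod *
        ((List.ofFn (fun i : Fin (m + 1) => σ i)).reverse).prod) :
    (c₁ * c₂ = c₂ * c₁ ∧ c₁ * c₃ = c₃ * c₁ ∧ c₂ * c₃ = c₃ * c₂) ∧
    ∀ x ∈ Subgroup.closure {c₁, c₂, c₃}, ∀ y ∈ Subgroup.closure {c₁, c₂, c₃},
      x * y = y * x := by
  have hcF : ∀ i j, i + 2 ≤ j → sg (m + 1) i * sg (m + 1) j = sg (m + 1) j * sg (m + 1) i :=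
    fun i j h => sg_comm i j h
  have hbF : ∀ i, i + 2 ≤ m + 1 → sg (m + 1) i * sg (m + 1) (i + 1) * sg (m + 1) i =
      sg (m + 1) (i + 1) * sg (m + 1) i * sg (m + 1) (i + 1) := fun i h => sg_braid i h
  -- rewrite c₂ and c₃ in terms of the word combinators
  have hc₃' : c₃ = asc (sg (m + 1)) 0 (m + 1) * dsc (sg (m + 1)) 0 (m + 1) := by
    rw [hc₃, ofFn_sg, List.range_eq_range', ← List.map_reverse, asc_eq_prod, dsc_eq_prod]
  have hc₂' : c₂ = d p * (dsc (sg (m + 1)) 1 m)⁻¹ := by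
    have hdrop : (List.range (m + 1)).drop 1 = List.range' 1 m := by
      have h := @List.range'_append_1 0 1 m
      rw [Nat.add_comm 1 m] at h
      rw [List.range_eq_range', show m + 1 = m + 1 from rfl, ← h]
      rw [List.drop_left']
      simp
    rw [hc₂, ofFn_sg, ← List.map_drop, hdrop, prod_map_inv, ← List.map_reverse, dsc_eq_prod]
  have hΔ : Delta (m + 1) = DelW (m + 1) (sg (m + 1)) := Delta_eq (m + 1)
  -- c₁ is central
  have hcent : ∀ x : B (m + 1), c₁ * x = x * c₁ := by
    intro x
    have hx : x ∈ Subgroup.centralizer {c₁} := by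
      refine PresentedGroup.generated_by _ _ (fun j => ?_) x
      rw [Subgroup.mem_centralizer_iff]
      intro g hg
      rw [Set.mem_singleton_iff] at hg
      subst hg
      rw [show (PresentedGroup.of j : B (m + 1)) = σ j from rfl, sg_eq j, hc₁, hΔ]
      exact DelW_sq_comm (m + 1) _ hcF hbF (j : ℕ) j.isLt
    exact Subgroup.mem_centralizer_iff.mp hx c₁ rfl
  have comm12 : c₁ * c₂ = c₂ * c₁ := hcent c₂
  have comm13 : c₁ * c₃ = c₃ * c₁ := hcent c₃
  -- c₃ commutes with σ_j for 1 ≤ j ≤ m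
  have hsgC : ∀ j, 1 ≤ j → j ≤ m → c₃ * sg (m + 1) j = sg (m + 1) j * c₃ := by
    intro j hj1 hj2
    obtain ⟨j', rfl⟩ : ∃ j', j = j' + 1 := ⟨j - 1, by omega⟩
    have hD := dsc_shift (sg (m + 1)) (m + 1) hcF hbF (m + 1) 0 j' (by omega) (by omega)
      (by omega)
    have hA := asc_shift (sg (m + 1)) (m + 1) hcF hbF (m + 1) 0 j' (by omega) (by omega)
      (by omega)
    rw [hc₃', mul_assoc, hD, ← mul_assoc, hA, mul_assoc]
  have hc₂mem : c₂ ∈ Subgroup.centralizer {c₃} := by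
    rw [hc₂']
    refine mul_mem ?_ (inv_mem ?_)
    · have hp : p ∈ Subgroup.comap d (Subgroup.centralizer {c₃}) := by
        refine PresentedGroup.generated_by _ _ (fun i => ?_) p
        rw [Subgroup.mem_comap, show (PresentedGroup.of i : B m) = σ i from rfl, hd i]
        rw [Subgroup.mem_centralizer_iff]
        intro g hg
        rw [Set.mem_singleton_iff] at hg
        subst hg
        rw [sg_eq i.succ, Fin.val_succ]
        exact hsgC _ (by omega) (by have := i.isLt; omega)
      simpa using hp
    · have hmem : ∀ l, l ≤ m → dsc (sg (m + 1)) 1 l ∈ Subgroup.centralizer {c₃} := by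
        intro l
        induction l with
        | zero => intro _; rw [dsc_zero]; exact one_mem _
        | succ l ih =>
          intro h
          rw [dsc_succ]
          refine mul_mem ?_ (ih (by omega))
          rw [Subgroup.mem_centralizer_iff]
          intro g hg
          rw [Set.mem_singleton_iff] at hg
          subst hg
          exact hsgC (1 + l) (by omega) (by omega)
      exact hmem m le_rfl
  have comm23 : c₂ * c₃ = c₃ * c₂ := (Subgroup.mem_centralizer_iff.mp hc₂mem c₃ rfl).symm
  refine ⟨⟨comm12, comm13, comm23⟩, ?_⟩
  -- the closure is abelian
  have hle : Subgroup.closure {c₁, c₂, c₃} ≤ Subgroup.centralizer {c₁, c₂, c₃} := by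
    rw [Subgroup.closure_le]
    intro g hg
    rw [SetLike.mem_coe, Subgroup.mem_centralizer_iff]
    intro h hh
    simp only [Set.mem_insert_iff, Set.mem_singleton_iff] at hg hh
    rcases hh with rfl | rfl | rfl <;> rcases hg with rfl | rfl | rfl <;>
      first
        | rfl
        | exact comm12 | exact comm12.symm
        | exact comm13 | exact comm13.symm
        | exact comm23 | exact comm23.symm
  intro x hx y hy
  have hyc := hle hy
  refine Subgroup.closure_induction (p := fun g _ => g * y = y * g) ?_ ?_ ?_ ?_ hx
  · intro z hz
    exact Subgroup.mem_centralizer_iff.mp hyc z hz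
  · simp
  · intro a b _ _ pa pb
    rw [mul_assoc, pb, ← mul_assoc, pa, mul_assoc]
  · intro a _ pa
    exact Commute.inv_left pa
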